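/- Fix integers k ≥ 2 and n ≥ 1. For every (γ₁, γ₂) ∈ 𝒫̃^{k,0}_{n,0,1} the final step of γ₁ is an E step, and the map that deletes the final step of γ₁ is a bijection from 𝒫̃^{k,0}_{n,0,1} onto 𝒫^{k,1}_{n,1}; in particular |𝒫̃^{k,0}_{n,0,1}| = |𝒫^{k,1}_{n,1}|. -/

import Mathlib

/-- A step of a lattice path: `E = (1,0)` or `N = (0,1)`. -/
inductive Step : Type
  | E | N
deriving DecidableEq, Repr

instance : Fintype Step :=
  ⟨{Step.E, Step.N}, fun x => by cases x <;> simp⟩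

/-- The terminal point of a lattice path starting at `(0,0)`. -/
def endpoint (γ : List Step) : ℤ × ℤ :=
  ((γ.count Step.E : ℤ), (γ.count Step.N : ℤ))

/-- The set of lattice points visited by a lattice path starting at `(0,0)`. -/
def vertices (γ : List Step) : Set (ℤ × ℤ) :=
  {p | ∃ i ≤ γ.length, endpoint (γ.take i) = p}

/-- The bottom-path condition: `γ = E N^{b₁} E N^{b₂} ⋯ E N^{b_m}` where every
`bᵢ ≡ k - 2 (mod k - 1)`. -/
def kGoodBottom (k : ℕ) (γ : List Step) : Prop :=
  ∃ bs : List ℕ, (∀ b ∈ bs, b % (k - 1) = (k - 2) % (k - 1)) ∧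
    γ = (bs.map fun b => Step.E :: List.replicate b Step.N).flatten

/-- `γ₁` stays weakly above `γ₂`: no visited point of `γ₂` lies strictly above a
visited point of `γ₁` with the same `x`-coordinate. -/
def weaklyAbove (γ₁ γ₂ : List Step) : Prop :=
  ∀ p ∈ vertices γ₁, ∀ q ∈ vertices γ₂, p.1 = q.1 → q.2 ≤ p.2

/-- The set `𝒫^{k,ε}_{n,δ}` of `k`-path pairs of length `((k-1)n - ε, (k-1)n)`
and distance `δ`. -/
def PathPairs (k n ε δ : ℕ) : Set (List Step × List Step) :=
  {p | p.1.length = (k - 1) * n - ε ∧ p.1.head? = some Step.N ∧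
       p.2.length = (k - 1) * n ∧ p.2.head? = some Step.E ∧
       (∀ q ∈ vertices p.1 ∩ vertices p.2, q = ((0 : ℤ), (0 : ℤ))) ∧
       (endpoint p.2).1 - (endpoint p.1).1 = (δ : ℤ) ∧
       kGoodBottom k p.2}

/-- The set `𝒫̃^{k,ε}_{n,δ,m}` of weak `k`-path pairs of distance `δ` with
exactly `m` returns (intersections away from the origin). -/
def WeakPathPairs (k n ε δ m : ℕ) : Set (List Step × List Step) :=
  {p | p.1.length = (k - 1) * n - ε ∧ p.1.head? = some Step.N ∧
       p.2.length = (k - 1) * n ∧ p.2.head? = some Step.E ∧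
       weaklyAbove p.1 p.2 ∧
       (endpoint p.2).1 - (endpoint p.1).1 = (δ : ℤ) ∧
       kGoodBottom k p.2 ∧
       ((vertices p.1 ∩ vertices p.2) \ {((0 : ℤ), (0 : ℤ))}).ncard = m}

/-- The generating function `C_k(t) = ∑_{n≥0} (1/(kn+1)) C(kn+1, n) tⁿ` of the
`k`-Catalan (Fuss–Catalan) numbers, as a formal power series over `ℚ`. -/
def fussCatalanGF (k : ℕ) : PowerSeries ℚ :=
  PowerSeries.mk fun n => (((k * n + 1 : ℕ) : ℚ))⁻¹ * ((k * n + 1).choose n : ℚ)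

namespace PPAux

lemma step_count_add (l : List Step) : l.count Step.E + l.count Step.N = l.length := by
  induction l with
  | nil => simp
  | cons a t ih => cases a <;> simp [List.count_cons] <;> omega

lemma count_take_le (l : List Step) (s : Step) (i : ℕ) :
    (l.take i).count s ≤ l.count s :=
  (l.take_sublist i).count_le s

lemma count_take_mono (l : List Step) (s : Step) {i j : ℕ} (h : i ≤ j) :
    (l.take i).count s ≤ (l.take j).count s := by
  have : l.take i = (l.take j).take i := by rw [List.take_take, Nat.min_eq_left h]
  rw [this]
  exact ((l.take j).take_sublist i).count_le s

lemma count_take_succ_le (l : List Step) (s : Step) (i : ℕ) :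
    (l.take (i+1)).count s ≤ (l.take i).count s + 1 := by
  rw [List.take_succ, List.count_append]
  have : l[i]?.toList.count s ≤ l[i]?.toList.length := List.count_le_length
  have hlen : l[i]?.toList.length ≤ 1 := by cases l[i]? <;> simp
  omega

lemma take_one_of_head? {l : List Step} {s : Step} (h : l.head? = some s) :
    l.take 1 = [s] := by
  cases l with
  | nil => simp at h
  | cons a t => simp at h; simp [h]

lemma count_one_head_E {l : List Step} (h : l.head? = some Step.E) :
    (l.take 1).count Step.E = 1 := by rw [take_one_of_head? h]; rfl

lemma count_one_head_N {l : List Step} (h : l.head? = some Step.N) :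
    (l.take 1).count Step.E = 0 := by rw [take_one_of_head? h]; rfl

lemma origin_mem_vertices (γ : List Step) : ((0:ℤ), (0:ℤ)) ∈ vertices γ :=
  ⟨0, Nat.zero_le _, by simp [endpoint]⟩

lemma endpoint_mem_vertices (γ : List Step) : endpoint γ ∈ vertices γ :=
  ⟨γ.length, le_refl _, by rw [List.take_length]⟩

lemma mem_vertices_concat {l : List Step} {s : Step} {p : ℤ × ℤ} :
    p ∈ vertices (l ++ [s]) ↔ p ∈ vertices l ∨ p = endpoint (l ++ [s]) := by
  constructor
  · rintro ⟨i, hi, rfl⟩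
    simp only [List.length_append, List.length_singleton] at hi
    rcases Nat.lt_or_ge i (l.length + 1) with h | h
    · left
      exact ⟨i, by omega, by rw [List.take_append_of_le_length (by omega)]⟩
    · right
      have : i = (l ++ [s]).length := by simp; omega
      rw [this, List.take_length]
  · rintro (⟨i, hi, h⟩ | rfl)
    · exact ⟨i, by simp; omega, by rw [List.take_append_of_le_length hi, h]⟩
    · exact endpoint_mem_vertices _

lemma eq_dropLast_append_of_getLast? {l : List Step} {s : Step}
    (h : l.getLast? = some s) : l = l.dropLast ++ [s] := by
  have hne : l ≠ [] := by rintro rfl; simp at h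
  rw [List.getLast?_eq_getLast hne, Option.some_inj] at h
  rw [← h]
  exact (List.dropLast_append_getLast hne).symm

lemma vertices_dropLast_subset (γ : List Step) : vertices γ.dropLast ⊆ vertices γ := by
  rintro p ⟨i, hi, h⟩
  rw [List.length_dropLast] at hi
  refine ⟨i, by omega, ?_⟩
  rw [List.dropLast_eq_take, List.take_take, Nat.min_eq_left hi] at h
  exact h

lemma count_take_ne (γ₁ γ₂ : List Step)
    (hd : ∀ q ∈ vertices γ₁ ∩ vertices γ₂, q = ((0:ℤ),(0:ℤ)))
    {i : ℕ} (h1 : 1 ≤ i) (hl1 : i ≤ γ₁.length) (hl2 : i ≤ γ₂.length) :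
    (γ₁.take i).count Step.E ≠ (γ₂.take i).count Step.E := by
  intro heq
  have e1 := step_count_add (γ₁.take i)
  have e2 := step_count_add (γ₂.take i)
  rw [List.length_take, Nat.min_eq_left hl1] at e1
  rw [List.length_take, Nat.min_eq_left hl2] at e2
  have hN : (γ₂.take i).count Step.N = (γ₁.take i).count Step.N := by omega
  have hmem : endpoint (γ₁.take i) ∈ vertices γ₁ ∩ vertices γ₂ :=
    ⟨⟨i, hl1, rfl⟩, ⟨i, hl2, by simp [endpoint, heq, hN]⟩⟩
  have h0 := hd _ hmem
  unfold endpoint at h0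
  rw [Prod.mk.injEq] at h0
  have hE0 : (γ₁.take i).count Step.E = 0 := by exact_mod_cast h0.1
  have hN0 : (γ₁.take i).count Step.N = 0 := by exact_mod_cast h0.2
  omega

lemma sep (γ₁ γ₂ : List Step) (h1 : γ₁.head? = some Step.N) (h2 : γ₂.head? = some Step.E)
    (hd : ∀ q ∈ vertices γ₁ ∩ vertices γ₂, q = ((0:ℤ),(0:ℤ))) :
    ∀ i, 1 ≤ i → i ≤ γ₁.length → i ≤ γ₂.length →
      (γ₁.take i).count Step.E + 1 ≤ (γ₂.take i).count Step.E := by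
  intro i
  induction i with
  | zero => omega
  | succ j ih =>
    intro _ hl1 hl2
    rcases Nat.eq_zero_or_pos j with rfl | hj
    · rw [count_one_head_N h1, count_one_head_E h2]
    · have IH := ih hj (by omega) (by omega)
      have a1 := count_take_succ_le γ₁ Step.E j
      have a2 := count_take_mono γ₂ Step.E (by omega : j ≤ j + 1)
      have hne := count_take_ne γ₁ γ₂ hd (i := j+1) (by omega) hl1 hl2
      omega

lemma weaklyAbove_of_disjoint (γ₁ γ₂ : List Step) (h1 : γ₁.head? = some Step.N)
    (h2 : γ₂.head? = some Step.E)
    (hd : ∀ q ∈ vertices γ₁ ∩ vertices γ₂, q = ((0:ℤ),(0:ℤ))) :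
    weaklyAbove γ₁ γ₂ := by
  rintro p ⟨i, hi, rfl⟩ q ⟨j, hj, rfl⟩ hx
  unfold endpoint at hx ⊢
  simp only at hx ⊢
  have hx' : (γ₁.take i).count Step.E = (γ₂.take j).count Step.E := by exact_mod_cast hx
  have e1 := step_count_add (γ₁.take i); rw [List.length_take, Nat.min_eq_left hi] at e1
  have e2 := step_count_add (γ₂.take j); rw [List.length_take, Nat.min_eq_left hj] at e2
  have hji : j ≤ i := by
    by_contra hc
    push_neg at hc
    rcases Nat.eq_zero_or_pos i with rfl | hi0
    · have hone : 1 ≤ (γ₂.take j).count Step.E := by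
        calc 1 = (γ₂.take 1).count Step.E := (count_one_head_E h2).symm
        _ ≤ _ := count_take_mono γ₂ Step.E (by omega)
      simp only [List.take_zero, List.count_nil] at hx'
      omega
    · have hs := sep γ₁ γ₂ h1 h2 hd i hi0 hi (by omega)
      have := count_take_mono γ₂ Step.E (le_of_lt hc)
      omega
  have : (γ₂.take j).count Step.N ≤ (γ₁.take i).count Step.N := by omega
  exact_mod_cast this

end PPAux

open PPAux

/-- From the proof of Proposition 3.1: every irreducible closed `k`-path pair has
final `γ₁`-step `E`, and deleting that step is a bijection onto `𝒫^{k,1}_{n,1}`. -/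
theorem irreducible_kPathPair_bijection (k n : ℕ) (hk : 2 ≤ k) (hn : 1 ≤ n) :
    (∀ p ∈ WeakPathPairs k n 0 0 1, p.1.getLast? = some Step.E) ∧
    Set.BijOn (fun p : List Step × List Step => (p.1.dropLast, p.2))
      (WeakPathPairs k n 0 0 1) (PathPairs k n 1 1) ∧
    (WeakPathPairs k n 0 0 1).ncard = (PathPairs k n 1 1).ncard := by
  have hL : 1 ≤ (k - 1) * n := Nat.mul_pos (by omega) hn
  -- Key facts about elements of `WeakPathPairs k n 0 0 1`.
  have key : ∀ p ∈ WeakPathPairs k n 0 0 1,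
      p.1.getLast? = some Step.E ∧
      p.1.count Step.E = p.2.count Step.E ∧
      endpoint p.1 = endpoint p.2 ∧
      ((vertices p.1 ∩ vertices p.2) \ {((0:ℤ),(0:ℤ))}) = {endpoint p.2} ∧
      1 ≤ p.2.count Step.E := by
    rintro ⟨γ₁, γ₂⟩ hp
    simp only [WeakPathPairs, Set.mem_setOf_eq, Nat.sub_zero] at hp
    obtain ⟨hlen1, hhd1, hlen2, hhd2, hwa, hdel, hgood, hcard⟩ := hp
    have hll : γ₁.length = γ₂.length := by rw [hlen1, hlen2]
    have hxE : γ₁.count Step.E = γ₂.count Step.E := by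
      simp only [endpoint] at hdel; push_cast at hdel; omega
    have s1 := step_count_add γ₁
    have s2 := step_count_add γ₂
    have hNeq : γ₁.count Step.N = γ₂.count Step.N := by omega
    have hend : endpoint γ₁ = endpoint γ₂ := by simp [endpoint, hxE, hNeq]
    have hx1 : 1 ≤ γ₂.count Step.E := by
      calc 1 = (γ₂.take 1).count Step.E := (count_one_head_E hhd2).symm
      _ ≤ _ := count_take_le γ₂ Step.E 1
    have hene : endpoint γ₂ ≠ ((0:ℤ),(0:ℤ)) := by
      intro h
      rw [endpoint, Prod.mk.injEq] at h
      have h1 := h.1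
      omega
    have hS : (vertices γ₁ ∩ vertices γ₂) \ {((0:ℤ),(0:ℤ))} = {endpoint γ₂} := by
      obtain ⟨a, ha⟩ := Set.ncard_eq_one.mp hcard
      have hmem : endpoint γ₂ ∈ (vertices γ₁ ∩ vertices γ₂) \ {((0:ℤ),(0:ℤ))} :=
        ⟨⟨hend ▸ endpoint_mem_vertices γ₁, endpoint_mem_vertices γ₂⟩, hene⟩
      rw [ha] at hmem
      rw [ha, Set.mem_singleton_iff.mp hmem]
    have hne1 : γ₁ ≠ [] := by rintro rfl; simp at hhd1
    have hlast : γ₁.getLast hne1 = Step.E := by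
      by_contra hc
      have hN : γ₁.getLast hne1 = Step.N := by
        cases h : γ₁.getLast hne1
        · exact absurd h hc
        · rfl
      have hsplit : γ₁ = γ₁.dropLast ++ [Step.N] := by
        rw [← hN]; exact (List.dropLast_append_getLast hne1).symm
      have hcE : γ₁.dropLast.count Step.E = γ₁.count Step.E := by
        conv_rhs => rw [hsplit]
        simp [List.count_append]
      have hcN : γ₁.count Step.N = γ₁.dropLast.count Step.N + 1 := by
        conv_lhs => rw [hsplit]
        simp [List.count_append]
      have hp' : endpoint γ₁.dropLast ∈ vertices γ₁ :=
        vertices_dropLast_subset γ₁ (endpoint_mem_vertices _)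
      have hle := hwa _ hp' _ (endpoint_mem_vertices γ₂) (by
        simp only [endpoint]
        exact_mod_cast hcE.trans hxE)
      simp only [endpoint] at hle
      have hle' : γ₂.count Step.N ≤ γ₁.dropLast.count Step.N := by exact_mod_cast hle
      omega
    refine ⟨?_, hxE, hend, hS, hx1⟩
    rw [List.getLast?_eq_getLast hne1, hlast]
  -- MapsTo
  have hmaps : Set.MapsTo (fun p : List Step × List Step => (p.1.dropLast, p.2))
      (WeakPathPairs k n 0 0 1) (PathPairs k n 1 1) := by
    rintro ⟨γ₁, γ₂⟩ hp
    obtain ⟨hlast, hxE, hend, hS, hx1⟩ := key _ hp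
    replace hlast : γ₁.getLast? = some Step.E := hlast
    replace hxE : γ₁.count Step.E = γ₂.count Step.E := hxE
    replace hS : (vertices γ₁ ∩ vertices γ₂) \ {((0:ℤ),(0:ℤ))} = {endpoint γ₂} := hS
    simp only [WeakPathPairs, Set.mem_setOf_eq, Nat.sub_zero] at hp
    obtain ⟨hlen1, hhd1, hlen2, hhd2, hwa, hdel, hgood, hcard⟩ := hp
    have hne1 : γ₁ ≠ [] := by rintro rfl; simp at hhd1
    have hsplit : γ₁ = γ₁.dropLast ++ [Step.E] := eq_dropLast_append_of_getLast? hlast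
    have s2 := step_count_add γ₂
    have hll : γ₁.length = γ₂.length := by rw [hlen1, hlen2]
    have h1L : 1 ≤ γ₁.length := by rw [hlen1]; exact hL
    show (γ₁.dropLast, γ₂) ∈ PathPairs k n 1 1
    simp only [PathPairs, Set.mem_setOf_eq]
    refine ⟨?_, ?_, hlen2, hhd2, ?_, ?_, hgood⟩
    · rw [List.length_dropLast, hlen1]
    · -- head? of dropLast
      cases γ₁ with
      | nil => simp at hhd1
      | cons a t =>
        cases t with
        | nil =>
          simp only [List.head?_cons, Option.some_inj] at hhd1
          simp only [List.getLast?_singleton, Option.some_inj] at hlast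
          rw [hhd1] at hlast
          exact absurd hlast (by decide)
        | cons b u =>
          simp only [List.head?_cons, Option.some_inj] at hhd1
          rw [List.dropLast_cons₂, List.head?_cons, hhd1]
    · -- disjointness
      intro q hq
      by_contra hq0
      have hq1 : q ∈ vertices γ₁ := vertices_dropLast_subset γ₁ hq.1
      have hqm : q ∈ (vertices γ₁ ∩ vertices γ₂) \ {((0:ℤ),(0:ℤ))} := ⟨⟨hq1, hq.2⟩, hq0⟩
      rw [hS, Set.mem_singleton_iff] at hqm
      rw [hqm] at hq
      obtain ⟨i, hi, hi2⟩ := hq.1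
      rw [List.length_dropLast] at hi
      have e1 := step_count_add (γ₁.dropLast.take i)
      rw [List.length_take, List.length_dropLast, Nat.min_eq_left hi] at e1
      rw [endpoint, endpoint, Prod.mk.injEq] at hi2
      have hE : (γ₁.dropLast.take i).count Step.E = γ₂.count Step.E := by
        exact_mod_cast hi2.1
      have hN : (γ₁.dropLast.take i).count Step.N = γ₂.count Step.N := by
        exact_mod_cast hi2.2
      omega
    · -- distance 1
      have hcE : γ₁.count Step.E = γ₁.dropLast.count Step.E + 1 := by
        conv_lhs => rw [hsplit]
        simp [List.count_append]
      simp only [endpoint]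
      push_cast
      omega
  -- InjOn
  have hinj : Set.InjOn (fun p : List Step × List Step => (p.1.dropLast, p.2))
      (WeakPathPairs k n 0 0 1) := by
    rintro ⟨γ₁, γ₂⟩ hp ⟨γ₁', γ₂'⟩ hp' heq
    simp only [Prod.mk.injEq] at heq
    have e1 : γ₁ = γ₁.dropLast ++ [Step.E] := eq_dropLast_append_of_getLast? (key _ hp).1
    have e2 : γ₁' = γ₁'.dropLast ++ [Step.E] := eq_dropLast_append_of_getLast? (key _ hp').1
    rw [Prod.mk.injEq]
    exact ⟨by rw [e1, e2, heq.1], heq.2⟩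
  -- SurjOn
  have hsurj : Set.SurjOn (fun p : List Step × List Step => (p.1.dropLast, p.2))
      (WeakPathPairs k n 0 0 1) (PathPairs k n 1 1) := by
    rintro ⟨γ₁', γ₂⟩ hp
    simp only [PathPairs, Set.mem_setOf_eq] at hp
    obtain ⟨hlen1, hhd1, hlen2, hhd2, hdis, hdel, hgood⟩ := hp
    have hne : γ₁' ≠ [] := by rintro rfl; simp at hhd1
    have hll : γ₁'.length + 1 = γ₂.length := by
      rw [hlen1, hlen2]; omega
    have hcE2 : γ₂.count Step.E = γ₁'.count Step.E + 1 := by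
      simp only [endpoint] at hdel; push_cast at hdel; omega
    have s1 := step_count_add γ₁'
    have s2 := step_count_add γ₂
    have hcN : γ₁'.count Step.N = γ₂.count Step.N := by omega
    have hcE1 : (γ₁' ++ [Step.E]).count Step.E = γ₁'.count Step.E + 1 := by
      simp [List.count_append]
    have hcN1 : (γ₁' ++ [Step.E]).count Step.N = γ₁'.count Step.N := by
      simp [List.count_append]
    have hendeq : endpoint (γ₁' ++ [Step.E]) = endpoint γ₂ := by
      rw [endpoint, endpoint, hcE1, hcN1, hcN, hcE2]
    have hx1 : 1 ≤ γ₂.count Step.E := by omega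
    have he0 : endpoint γ₂ ≠ ((0:ℤ),(0:ℤ)) := by
      intro h
      rw [endpoint, Prod.mk.injEq] at h
      have h1 := h.1
      omega
    refine ⟨(γ₁' ++ [Step.E], γ₂), ?_, ?_⟩
    · show (γ₁' ++ [Step.E], γ₂) ∈ WeakPathPairs k n 0 0 1
      simp only [WeakPathPairs, Set.mem_setOf_eq, Nat.sub_zero]
      refine ⟨?_, ?_, hlen2, hhd2, ?_, ?_, hgood, ?_⟩
      · rw [List.length_append, List.length_singleton, ← hlen2, ← hll]
      · cases γ₁' with
        | nil => simp at hhd1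
        | cons a t =>
          simp only [List.head?_cons, Option.some_inj] at hhd1
          rw [List.cons_append, List.head?_cons, hhd1]
      · -- weaklyAbove
        intro p hp q hq hx
        rcases mem_vertices_concat.mp hp with hp' | rfl
        · exact weaklyAbove_of_disjoint γ₁' γ₂ hhd1 hhd2 hdis p hp' q hq hx
        · obtain ⟨j, hj, rfl⟩ := hq
          have hct := count_take_le γ₂ Step.N j
          rw [hendeq]
          simp only [endpoint]
          exact_mod_cast hct
      · simp only [endpoint, hcE1]
        push_cast
        omega
      · have hSS : (vertices (γ₁' ++ [Step.E]) ∩ vertices γ₂) \ {((0:ℤ),(0:ℤ))}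
            = {endpoint γ₂} := by
          ext q
          simp only [Set.mem_diff, Set.mem_inter_iff, Set.mem_singleton_iff]
          constructor
          · rintro ⟨⟨hq1, hq2⟩, hq0⟩
            rcases mem_vertices_concat.mp hq1 with h | h
            · exact absurd (hdis q ⟨h, hq2⟩) hq0
            · rw [h, hendeq]
          · rintro rfl
            exact ⟨⟨mem_vertices_concat.mpr (Or.inr hendeq.symm),
              endpoint_mem_vertices γ₂⟩, he0⟩
        rw [hSS, Set.ncard_singleton]
    · show ((γ₁' ++ [Step.E]).dropLast, γ₂) = (γ₁', γ₂)
      rw [List.dropLast_concat]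
  have hbij : Set.BijOn (fun p : List Step × List Step => (p.1.dropLast, p.2))
      (WeakPathPairs k n 0 0 1) (PathPairs k n 1 1) := ⟨hmaps, hinj, hsurj⟩
  refine ⟨fun p hp => (key p hp).1, hbij, ?_⟩
  rw [← hbij.image_eq, Set.ncard_image_of_injOn hinj]
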